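/- arXiv:2111.02183 — 8 statements merged into one kernel-verified Lean document; each statement's English description precedes it below -/
import Mathlib

section
/- Let k ≥ 1, let p₁,…,p_k be distinct primes and n = p₁⋯p_k, and let v be a positive divisor of n. Then the degree of v in the k-dprime divisor function graph Γ_k equals 2^k − 1 if v = 1 or v = n, and equals 2^{ω(v)} + 2^{k−ω(v)} − 2 otherwise, where ω(v) denotes the number of distinct prime divisors of v. -/
/-- The `k`-dprime divisor function graph on the positive divisors of `n`:
two distinct divisors `u`, `v` are adjacent iff `u ∣ v` or `v ∣ u`. -/
def divisorGraph (n : ℕ) : SimpleGraph {d : ℕ // d ∈ n.divisors} where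
  Adj u v := u ≠ v ∧ ((u : ℕ) ∣ (v : ℕ) ∨ (v : ℕ) ∣ (u : ℕ))
  symm := ⟨fun _ _ ⟨h, hd⟩ => ⟨h.symm, hd.symm⟩⟩
  loopless := ⟨fun _ ⟨h, _⟩ => h rfl⟩

instance (n : ℕ) : DecidableRel (divisorGraph n).Adj :=
  fun _ _ => instDecidableAnd

lemma squarefree_prod_primes (s : Finset ℕ) (hs : ∀ p ∈ s, p.Prime) :
    Squarefree (∏ p ∈ s, p) := by
  classical
  induction s using Finset.induction with
  | empty => simpa using squarefree_one
  | @insert a s ha ih =>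
    rw [Finset.prod_insert ha]
    have hap := hs a (Finset.mem_insert_self a s)
    have hrest : ∀ p ∈ s, p.Prime := fun p hp => hs p (Finset.mem_insert_of_mem hp)
    refine (Nat.squarefree_mul ?_).mpr ⟨hap.prime.squarefree, ih hrest⟩
    rw [Nat.Prime.coprime_iff_not_dvd hap]
    intro hdvd
    obtain ⟨q, hq, haq⟩ := (Prime.dvd_finset_prod_iff hap.prime _).mp hdvd
    exact ha (((Nat.prime_dvd_prime_iff_eq hap (hrest q hq)).mp haq) ▸ hq)

lemma card_divisors_squarefree {m : ℕ} (hm : Squarefree m) :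
    m.divisors.card = 2 ^ m.primeFactors.card := by
  have hm0 : m ≠ 0 := hm.ne_zero
  rw [Nat.card_divisors hm0]
  rw [Finset.prod_congr rfl (fun p hp => ?_), Finset.prod_const]
  have hp := Nat.prime_of_mem_primeFactors hp
  have hpd := Nat.dvd_of_mem_primeFactors ‹p ∈ m.primeFactors›
  rw [Nat.factorization_eq_one_of_squarefree hm hp hpd]

theorem stmt_1 (k : ℕ) (hk : 1 ≤ k) (p : Fin k → ℕ) (hp : ∀ i, (p i).Prime)
    (hinj : Function.Injective p) (n : ℕ) (hn : n = ∏ i, p i)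
    (v : ℕ) (hv : v ∈ n.divisors) :
    (divisorGraph n).degree ⟨v, hv⟩ =
      if v = 1 ∨ v = n then 2 ^ k - 1
      else 2 ^ v.primeFactors.card + 2 ^ (k - v.primeFactors.card) - 2 := by
  classical
  obtain ⟨hvn, hn0⟩ := Nat.mem_divisors.mp hv
  -- n is a squarefree number with exactly k prime factors
  have himage : n = ∏ q ∈ Finset.image p Finset.univ, q := by
    rw [Finset.prod_image (fun a _ b _ h => hinj h), hn]
  have hsf : Squarefree n := by
    rw [himage]
    exact squarefree_prod_primes _ (by simpa using fun i => hp i)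
  have hpf : n.primeFactors = Finset.image p Finset.univ := by
    rw [himage]
    exact Nat.primeFactors_prod (by simpa using fun i => hp i)
  have hcardpf : n.primeFactors.card = k := by
    rw [hpf, Finset.card_image_of_injective _ hinj, Finset.card_univ, Fintype.card_fin]
  have hv0 : v ≠ 0 := fun h => hn0 (Nat.eq_zero_of_zero_dvd (h ▸ hvn))
  set w := n / v with hw
  have hvw : v * w = n := Nat.mul_div_cancel' hvn
  have hsfvw : Squarefree (v * w) := hvw ▸ hsf
  have hcop : Nat.Coprime v w := Nat.coprime_of_squarefree_mul hsfvw
  have hsfv : Squarefree v := hsfvw.of_mul_left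
  have hsfw : Squarefree w := hsfvw.of_mul_right
  have hw0 : w ≠ 0 := hsfw.ne_zero
  have hcards : v.primeFactors.card + w.primeFactors.card = k := by
    rw [← hcardpf, ← hvw, Nat.Coprime.primeFactors_mul hcop,
      Finset.card_union_of_disjoint (Nat.Coprime.disjoint_primeFactors hcop)]
  set a := v.primeFactors.card with hadef
  set b := w.primeFactors.card with hbdef
  -- degree equals the cardinality of a plain finset of naturals
  have hdeg : (divisorGraph n).degree ⟨v, hv⟩ =
      (n.divisors.filter (fun u => u ≠ v ∧ (v ∣ u ∨ u ∣ v))).card := by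
    rw [← SimpleGraph.card_neighborFinset_eq_degree]
    refine Finset.card_bij (fun u _ => (u : ℕ)) ?_ ?_ ?_
    · rintro ⟨u, hu⟩ hmem
      rw [SimpleGraph.mem_neighborFinset] at hmem
      obtain ⟨hne, hd⟩ := hmem
      exact Finset.mem_filter.mpr ⟨hu, fun h => hne (Subtype.ext h.symm), hd⟩
    · rintro ⟨u₁, h₁⟩ _ ⟨u₂, h₂⟩ _ h
      simpa using h
    · intro u hu
      obtain ⟨hud, hne, hdvd⟩ := Finset.mem_filter.mp hu
      refine ⟨⟨u, hud⟩, ?_, rfl⟩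
      rw [SimpleGraph.mem_neighborFinset]
      exact ⟨fun h => hne (congrArg Subtype.val h).symm, hdvd⟩
  -- identify the filtered set
  have hset : n.divisors.filter (fun u => u ≠ v ∧ (v ∣ u ∨ u ∣ v)) =
      (v.divisors ∪ n.divisors.filter (fun u => v ∣ u)).erase v := by
    ext u
    simp only [Finset.mem_filter, Finset.mem_erase, Finset.mem_union, Nat.mem_divisors]
    constructor
    · rintro ⟨⟨hun, -⟩, hne, hd⟩
      refine ⟨hne, ?_⟩
      rcases hd with hd | hd
      · exact Or.inr ⟨⟨hun, hn0⟩, hd⟩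
      · exact Or.inl ⟨hd, hv0⟩
    · rintro ⟨hne, h | h⟩
      · exact ⟨⟨h.1.trans hvn, hn0⟩, hne, Or.inr h.1⟩
      · exact ⟨h.1, hne, Or.inl h.2⟩
  -- multiples of v among divisors of n are v * (divisors of w)
  have hmul : n.divisors.filter (fun u => v ∣ u) = w.divisors.image (v * ·) := by
    ext u
    simp only [Finset.mem_filter, Finset.mem_image, Nat.mem_divisors]
    constructor
    · rintro ⟨⟨hun, -⟩, hvu⟩
      refine ⟨u / v, ⟨?_, hw0⟩, Nat.mul_div_cancel' hvu⟩
      have : v * (u / v) ∣ v * w := by rw [Nat.mul_div_cancel' hvu, hvw]; exact hun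
      exact (mul_dvd_mul_iff_left (by exact_mod_cast hv0 : (v : ℕ) ≠ 0)).mp this
    · rintro ⟨e, ⟨hew, -⟩, rfl⟩
      exact ⟨⟨by rw [← hvw]; exact mul_dvd_mul_left v hew, hn0⟩, dvd_mul_right v e⟩
  have hcard_mul : (n.divisors.filter (fun u => v ∣ u)).card = 2 ^ b := by
    rw [hmul, Finset.card_image_of_injective _ (mul_right_injective₀ hv0),
      card_divisors_squarefree hsfw]
  have hcard_div : v.divisors.card = 2 ^ a := card_divisors_squarefree hsfv
  -- intersection is {v}
  have hinter : v.divisors ∩ n.divisors.filter (fun u => v ∣ u) = {v} := by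
    ext u
    simp only [Finset.mem_inter, Finset.mem_filter, Nat.mem_divisors, Finset.mem_singleton]
    constructor
    · rintro ⟨⟨huv, -⟩, -, hvu⟩
      exact Nat.dvd_antisymm huv hvu
    · rintro rfl
      exact ⟨⟨dvd_rfl, hv0⟩, ⟨hvn, hn0⟩, dvd_rfl⟩
  have hvmem : v ∈ v.divisors ∪ n.divisors.filter (fun u => v ∣ u) :=
    Finset.mem_union_left _ (Nat.mem_divisors.mpr ⟨dvd_rfl, hv0⟩)
  have hunion : (v.divisors ∪ n.divisors.filter (fun u => v ∣ u)).card = 2 ^ a + 2 ^ b - 1 := by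
    have := Finset.card_union_add_card_inter v.divisors (n.divisors.filter (fun u => v ∣ u))
    rw [hinter, hcard_div, hcard_mul, Finset.card_singleton] at this
    omega
  have hdeg2 : (divisorGraph n).degree ⟨v, hv⟩ = 2 ^ a + 2 ^ b - 2 := by
    rw [hdeg, hset, Finset.card_erase_of_mem hvmem, hunion]
    have ha1 : 1 ≤ 2 ^ a := Nat.one_le_two_pow
    have hb1 : 1 ≤ 2 ^ b := Nat.one_le_two_pow
    omega
  have hb : b = k - a := by omega
  rw [hdeg2, hb]
  split_ifs with h
  · rcases h with rfl | rfl
    · have ha0 : a = 0 := by simp [hadef]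
      rw [ha0, Nat.sub_zero, pow_zero]
      have : 1 ≤ 2 ^ k := Nat.one_le_two_pow
      omega
    · have hw1 : w = 1 := mul_left_cancel₀ hv0 (hvw.trans (mul_one v).symm)
      have ha : a = k := by
        simp [hbdef, hw1] at hcards
        omega
      rw [ha, Nat.sub_self, pow_zero]
      have : 1 ≤ 2 ^ k := Nat.one_le_two_pow
      omega
  · rfl
end

section
/- Let k ≥ 1, let p₁,…,p_k be distinct primes, let n = p₁⋯p_k and n' = p₁⋯p_{k−1}. Then the number of edges of the k-dprime divisor function graph Γ_k on the divisors of n equals the number of edges of the (k−1)-dprime divisor function graph Γ_{k−1} on the divisors of n' plus the sum, over all positive divisors v of n', of (deg_{Γ_{k−1}}(v) + 1). -/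
/-- The number of edges of the divisor graph on divisors of `m` equals
`∑_{v ∣ m} (τ(v) - 1)`. -/
lemma divisorGraph_edgeCard (m : ℕ) (hm : m ≠ 0) :
    (divisorGraph m).edgeFinset.card = ∑ v ∈ m.divisors, (v.divisors.card - 1) := by
  classical
  have key : (divisorGraph m).edgeFinset.card
      = ((m.divisors ×ˢ m.divisors).filter fun q => q.1 ∣ q.2 ∧ q.1 ≠ q.2).card := by
    refine (Finset.card_bij
      (fun q hq => s(⟨q.1, (Finset.mem_product.mp (Finset.mem_filter.mp hq).1).1⟩,
                     ⟨q.2, (Finset.mem_product.mp (Finset.mem_filter.mp hq).1).2⟩))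
      ?_ ?_ ?_).symm
    · intro q hq
      obtain ⟨hmem, hdvd, hne⟩ := Finset.mem_filter.mp hq
      rw [SimpleGraph.mem_edgeFinset, SimpleGraph.mem_edgeSet]
      exact ⟨fun h => hne (congrArg Subtype.val h), Or.inl hdvd⟩
    · intro q₁ hq₁ q₂ hq₂ h
      obtain ⟨_, hdvd₁, hne₁⟩ := Finset.mem_filter.mp hq₁
      obtain ⟨_, hdvd₂, hne₂⟩ := Finset.mem_filter.mp hq₂
      rcases Sym2.eq_iff.mp h with ⟨h1, h2⟩ | ⟨h1, h2⟩
      · exact Prod.ext (congrArg Subtype.val h1) (congrArg Subtype.val h2)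
      · exfalso
        have e1 : q₁.1 = q₂.2 := congrArg Subtype.val h1
        have e2 : q₁.2 = q₂.1 := congrArg Subtype.val h2
        exact hne₂ (Nat.dvd_antisymm hdvd₂ (e1 ▸ e2 ▸ hdvd₁))
    · intro e he
      induction e with
      | _ x y =>
        rw [SimpleGraph.mem_edgeFinset, SimpleGraph.mem_edgeSet] at he
        obtain ⟨hne, hdvd | hdvd⟩ := he
        · refine ⟨(x.1, y.1), Finset.mem_filter.mpr
            ⟨Finset.mem_product.mpr ⟨x.2, y.2⟩, hdvd,
              fun h => hne (Subtype.ext h)⟩, ?_⟩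
          simp
        · refine ⟨(y.1, x.1), Finset.mem_filter.mpr
            ⟨Finset.mem_product.mpr ⟨y.2, x.2⟩, hdvd,
              fun h => hne (Subtype.ext h.symm)⟩, ?_⟩
          simp
  rw [key, Finset.card_eq_sum_card_fiberwise
    (f := Prod.snd) (t := m.divisors)
    (fun q hq => (Finset.mem_product.mp (Finset.mem_filter.mp hq).1).2)]
  refine Finset.sum_congr rfl fun v hv => ?_
  have hv0 : v ≠ 0 := Nat.pos_of_mem_divisors hv |>.ne'
  have hvmem : v ∈ v.divisors := Nat.mem_divisors_self v hv0
  rw [← Finset.card_erase_of_mem hvmem]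
  refine Finset.card_bij (fun q _ => q.1) ?_ ?_ ?_
  · intro q hq
    simp only [Finset.mem_filter, Finset.mem_product] at hq
    obtain ⟨⟨⟨hq1, hq2⟩, hdvd, hne⟩, h2v⟩ := hq
    subst h2v
    exact Finset.mem_erase.mpr ⟨hne, Nat.mem_divisors.mpr ⟨hdvd, hv0⟩⟩
  · intro q₁ hq₁ q₂ hq₂ h
    simp only [Finset.mem_filter, Finset.mem_product] at hq₁ hq₂
    exact Prod.ext h (hq₁.2.trans hq₂.2.symm)
  · intro u hu
    obtain ⟨hne, humem⟩ := Finset.mem_erase.mp hu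
    have hudvd : u ∣ v := Nat.dvd_of_mem_divisors humem
    have hudvdm : u ∈ m.divisors :=
      Nat.mem_divisors.mpr ⟨hudvd.trans (Nat.dvd_of_mem_divisors hv), hm⟩
    exact ⟨(u, v), by simp [Finset.mem_filter, Finset.mem_product, hudvdm, hv, hudvd, hne], rfl⟩

/-- Splitting a sum over divisors of `p * m` for `p` a prime not dividing `m`. -/
lemma sum_divisors_mul_prime {M : Type*} [AddCommMonoid M] (f : ℕ → M) (p m : ℕ)
    (hp : p.Prime) (hpm : ¬ p ∣ m) (hm : m ≠ 0) :
    ∑ d ∈ (p * m).divisors, f d = ∑ d ∈ m.divisors, (f d + f (p * d)) := by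
  have hp0 : p ≠ 0 := hp.pos.ne'
  have hset : (p * m).divisors = m.divisors ∪ m.divisors.image (p * ·) := by
    ext d
    simp only [Nat.mem_divisors, Finset.mem_union, Finset.mem_image, Nat.mul_ne_zero_iff]
    constructor
    · rintro ⟨hd, -⟩
      by_cases hpd : p ∣ d
      · obtain ⟨e, rfl⟩ := hpd
        right
        have he : e ∣ m := (mul_dvd_mul_iff_left hp0).mp hd
        exact ⟨e, ⟨he, hm⟩, rfl⟩
      · left
        have hco : d.Coprime p := ((Nat.Prime.coprime_iff_not_dvd hp).mpr hpd).symm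
        exact ⟨(Nat.Coprime.dvd_of_dvd_mul_left hco hd), hm⟩
    · rintro (⟨hd, -⟩ | ⟨e, ⟨he, -⟩, rfl⟩)
      · exact ⟨hd.mul_left p, hp0, hm⟩
      · exact ⟨mul_dvd_mul_left p he, hp0, hm⟩
  have hdisj : Disjoint m.divisors (m.divisors.image (p * ·)) := by
    rw [Finset.disjoint_right]
    rintro d hd hdm
    obtain ⟨e, -, rfl⟩ := Finset.mem_image.mp hd
    exact hpm ((dvd_mul_right p e).trans (Nat.dvd_of_mem_divisors hdm))
  rw [hset, Finset.sum_union hdisj,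
    Finset.sum_image (fun a _ b _ h => Nat.eq_of_mul_eq_mul_left hp.pos h),
    Finset.sum_add_distrib]

theorem stmt_2 (k : ℕ) (hk : 1 ≤ k) (p : Fin k → ℕ) (hp : ∀ i, (p i).Prime)
    (hinj : Function.Injective p) (n n' : ℕ) (hn : n = ∏ i, p i)
    (hn' : n' = ∏ i : Fin (k - 1), p (Fin.castLE (Nat.sub_le k 1) i)) :
    (divisorGraph n).edgeFinset.card =
      (divisorGraph n').edgeFinset.card +
        ∑ v : {d : ℕ // d ∈ n'.divisors}, ((divisorGraph n').degree v + 1) := by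
  classical
  obtain ⟨m, rfl⟩ : ∃ m, k = m + 1 := ⟨k - 1, by omega⟩
  set P : ℕ := p (Fin.last m) with hP
  have hPp : P.Prime := hp _
  have hfactor : n = P * n' := by
    rw [hn, hn', Fin.prod_univ_castSucc (f := p), mul_comm]
    congr 1
  have hn'0 : n' ≠ 0 := by
    rw [hn']
    exact (Finset.prod_pos fun i _ => (hp _).pos).ne'
  have hPn' : ¬ P ∣ n' := by
    rw [hn']
    intro hdvd
    obtain ⟨i, -, hdi⟩ := hPp.prime.exists_mem_finset_dvd hdvd
    have : P = p (Fin.castLE (Nat.sub_le (m + 1) 1) i) :=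
      (Nat.prime_dvd_prime_iff_eq hPp (hp _)).mp hdi
    have := hinj this
    have : (Fin.last m).val = i.val := congrArg Fin.val this
    simp only [Fin.val_last] at this
    omega
  have hn0 : n ≠ 0 := by
    rw [hfactor]; exact Nat.mul_ne_zero hPp.pos.ne' hn'0
  -- key cardinalities
  have htau : ∀ d ∈ n'.divisors, (P * d).divisors.card = 2 * d.divisors.card := by
    intro d hd
    have hPd : ¬ P ∣ d := fun h => hPn' (h.trans (Nat.dvd_of_mem_divisors hd))
    have hco : P.Coprime d := (Nat.Prime.coprime_iff_not_dvd hPp).mpr hPd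
    rw [Nat.Coprime.card_divisors_mul hco, hPp.divisors]
    rw [Finset.card_insert_of_notMem (by simp [hPp.one_lt.ne]), Finset.card_singleton]
  have htau1 : ∀ d ∈ n'.divisors, 1 ≤ d.divisors.card := by
    intro d hd
    exact Finset.card_pos.mpr ⟨1, Nat.one_mem_divisors.mpr (Nat.pos_of_mem_divisors hd).ne'⟩
  -- left side
  have hL : (divisorGraph n).edgeFinset.card
      = ∑ d ∈ n'.divisors, (3 * (d.divisors.card - 1) + 1) := by
    rw [divisorGraph_edgeCard n hn0, hfactor,
      sum_divisors_mul_prime (fun d => d.divisors.card - 1) P n' hPp hPn' hn'0]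
    refine Finset.sum_congr rfl fun d hd => ?_
    have h1 := htau1 d hd
    have h2 := htau d hd
    omega
  -- right side pieces
  have hdeg : ∑ v : {d : ℕ // d ∈ n'.divisors}, ((divisorGraph n').degree v + 1)
      = 2 * (divisorGraph n').edgeFinset.card + n'.divisors.card := by
    rw [Finset.sum_add_distrib, SimpleGraph.sum_degrees_eq_twice_card_edges]
    simp [Finset.card_univ]
  have hE' : (divisorGraph n').edgeFinset.card
      = ∑ d ∈ n'.divisors, (d.divisors.card - 1) := divisorGraph_edgeCard n' hn'0
  rw [hL, hdeg, hE', Finset.sum_add_distrib, ← Finset.mul_sum]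
  simp only [Finset.sum_const, smul_eq_mul, mul_one]
  ring
end

section
/- Let k ≥ 1, let p₁,…,p_k be distinct primes, let n = p₁⋯p_k and n' = p₁⋯p_{k−1}. Then the number of edges of the k-dprime divisor function graph Γ_k on the divisors of n equals the number of edges of the (k−1)-dprime divisor function graph Γ_{k−1} on the divisors of n' plus 2·3^{k−1} − 2^{k−1}. -/
open Finset ArithmeticFunction ArithmeticFunction.zeta in
lemma key (j : ℕ) (q : Fin j → ℕ) (hq : ∀ i, (q i).Prime)
    (hinj : Function.Injective q) :
    (divisorGraph (∏ i, q i)).edgeFinset.card = 3 ^ j - 2 ^ j := by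
  set m := ∏ i, q i with hm
  have hpairwise : (↑(Finset.univ : Finset (Fin j)) : Set (Fin j)).Pairwise (Function.onFun Nat.Coprime q) :=
    fun x _ y _ hxy => (Nat.coprime_primes (hq x) (hq y)).mpr fun h => hxy (hinj h)
  have hm0 : m ≠ 0 := by
    rw [hm]
    exact Finset.prod_ne_zero_iff.mpr fun i _ => (hq i).pos.ne'
  -- card of divisors = 2 ^ j
  have hσ : m.divisors.card = 2 ^ j := by
    have := (isMultiplicative_sigma (k := 0)).map_prod q Finset.univ hpairwise
    rw [← hm, sigma_zero_apply] at this
    rw [this]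
    simp only [sigma_zero_apply]
    rw [Finset.prod_congr rfl fun i _ => by
      rw [(hq i).divisors, Finset.card_insert_of_notMem (by simp [(hq i).ne_one.symm]),
        Finset.card_singleton]]
    simp [Finset.prod_const]
  -- sum of divisor counts = 3 ^ j
  have hD : ∑ v ∈ m.divisors, v.divisors.card = 3 ^ j := by
    have hmult : IsMultiplicative (ζ * ArithmeticFunction.sigma 0) :=
      isMultiplicative_zeta.mul isMultiplicative_sigma
    have := hmult.map_prod q Finset.univ hpairwise
    rw [← hm] at this
    have hval : ∀ i : Fin j, (ζ * ArithmeticFunction.sigma 0) (q i) = 3 := by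
      intro i
      rw [zeta_mul_apply, (hq i).divisors,
        Finset.sum_insert (by simp [(hq i).ne_one.symm]), Finset.sum_singleton,
        sigma_zero_apply, sigma_zero_apply, Nat.divisors_one, (hq i).divisors]
      simp [Finset.card_insert_of_notMem, (hq i).ne_one.symm]
    rw [Finset.prod_congr rfl fun i _ => hval i, Finset.prod_const] at this
    rw [zeta_mul_apply] at this
    simp only [sigma_zero_apply] at this
    simpa using this
  classical
  -- counting
  have h2 : 2 * (divisorGraph m).edgeFinset.card =
      (Finset.univ.filter fun (z : _ × _) => (divisorGraph m).Adj z.1 z.2).card :=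
    SimpleGraph.two_mul_card_edgeFinset (divisorGraph m)
  set V := {d : ℕ // d ∈ m.divisors} with hV
  set P : Finset (V × V) :=
    Finset.univ.filter (fun z : V × V => ((z.1 : ℕ) ∣ (z.2 : ℕ)) ∧ z.1 ≠ z.2) with hP
  set P' : Finset (V × V) :=
    Finset.univ.filter (fun z : V × V => ((z.2 : ℕ) ∣ (z.1 : ℕ)) ∧ z.1 ≠ z.2) with hP'
  set Diag : Finset (V × V) := Finset.univ.filter (fun z : V × V => z.1 = z.2) with hDiag
  set Full : Finset (V × V) :=
    Finset.univ.filter (fun z : V × V => (z.1 : ℕ) ∣ (z.2 : ℕ)) with hFull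
  have hanti : ∀ z : V × V, (z.1 : ℕ) ∣ (z.2 : ℕ) → (z.2 : ℕ) ∣ (z.1 : ℕ) → z.1 = z.2 :=
    fun z h1 h12 => Subtype.ext (Nat.dvd_antisymm h1 h12)
  -- Adjacency set splits
  have hAeq : (Finset.univ.filter fun (z : V × V) => (divisorGraph m).Adj z.1 z.2)
      = P ∪ P' := by
    rw [hP, hP', ← Finset.filter_or]
    apply Finset.filter_congr
    intro z _
    simp only [divisorGraph]
    constructor
    · rintro ⟨hne, h | h⟩
      · exact Or.inl ⟨h, hne⟩
      · exact Or.inr ⟨h, hne⟩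
    · rintro (⟨h, hne⟩ | ⟨h, hne⟩)
      · exact ⟨hne, Or.inl h⟩
      · exact ⟨hne, Or.inr h⟩
  have hdisj : Disjoint P P' := by
    rw [Finset.disjoint_left]
    intro z hz hz'
    rw [hP, Finset.mem_filter] at hz
    rw [hP', Finset.mem_filter] at hz'
    exact hz.2.2 (hanti z hz.2.1 hz'.2.1)
  have hPP' : P'.card = P.card := by
    apply Finset.card_nbij' (i := Prod.swap) (j := Prod.swap)
    · intro z hz
      rw [hP', Finset.mem_coe, Finset.mem_filter] at hz
      rw [hP, Finset.mem_coe, Finset.mem_filter]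
      exact ⟨Finset.mem_univ _, hz.2.1, fun h => hz.2.2 h.symm⟩
    · intro z hz
      rw [hP, Finset.mem_coe, Finset.mem_filter] at hz
      rw [hP', Finset.mem_coe, Finset.mem_filter]
      exact ⟨Finset.mem_univ _, hz.2.1, fun h => hz.2.2 h.symm⟩
    · intro a _; rfl
    · intro a _; rfl
  -- Full splits as P ∪ Diag
  have hsplit : P.card + Diag.card = Full.card := by
    have := Finset.card_filter_add_card_filter_not
      (s := Full) (p := fun z : V × V => z.1 = z.2)
    rw [hFull, Finset.filter_filter, Finset.filter_filter] at this
    have e1 : (Finset.univ.filter fun z : V × V => (z.1 : ℕ) ∣ (z.2 : ℕ) ∧ z.1 = z.2)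
        = Diag := by
      rw [hDiag]
      apply Finset.filter_congr
      intro z _
      constructor
      · exact fun h => h.2
      · exact fun h => ⟨by rw [h], h⟩
    have e2 : (Finset.univ.filter fun z : V × V => (z.1 : ℕ) ∣ (z.2 : ℕ) ∧ ¬z.1 = z.2)
        = P := by rw [hP]
    rw [e1, e2, ← hFull] at this
    omega
  -- Diag card
  have hDiagCard : Diag.card = 2 ^ j := by
    have : Diag.card = (Finset.univ : Finset V).card := by
      apply Finset.card_nbij (i := Prod.fst)
      · intro z _; exact Finset.mem_univ _
      · intro a ha b hb hab
        simp only [hDiag, Finset.coe_filter, Set.mem_setOf_eq] at ha hb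
        exact Prod.ext hab (by rw [← ha.2, ← hb.2, hab])
      · intro v _
        refine ⟨(v, v), ?_, rfl⟩
        simp [hDiag]
    rw [this, ← hσ, Finset.card_univ]
    exact Fintype.card_coe _
  -- Full card
  have hFullCard : Full.card = 3 ^ j := by
    rw [← hD, ← Finset.card_sigma]
    symm
    apply Finset.card_bij
      (i := fun (x : Σ _ : ℕ, ℕ) (hx : x ∈ m.divisors.sigma fun v => v.divisors) =>
        ((⟨x.2, Nat.mem_divisors.mpr
            ⟨(Nat.mem_divisors.mp (Finset.mem_sigma.mp hx).2).1.trans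
              (Nat.mem_divisors.mp (Finset.mem_sigma.mp hx).1).1, hm0⟩⟩ : V),
          (⟨x.1, (Finset.mem_sigma.mp hx).1⟩ : V)))
    · intro x hx
      rw [hFull, Finset.mem_filter]
      exact ⟨Finset.mem_univ _, (Nat.mem_divisors.mp (Finset.mem_sigma.mp hx).2).1⟩
    · intro a ha b hb hab
      simp only [Prod.mk.injEq, Subtype.mk.injEq] at hab
      exact Sigma.ext hab.2 (heq_of_eq hab.1)
    · intro z hz
      rw [hFull, Finset.mem_filter] at hz
      refine ⟨⟨(z.2 : ℕ), (z.1 : ℕ)⟩, ?_, by simp⟩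
      rw [Finset.mem_sigma]
      exact ⟨z.2.2, Nat.mem_divisors.mpr ⟨hz.2, Nat.pos_of_mem_divisors z.2.2 |>.ne'⟩⟩
  -- conclude
  rw [hAeq, Finset.card_union_of_disjoint hdisj, hPP'] at h2
  have h23 : (2:ℕ) ^ j ≤ 3 ^ j := Nat.pow_le_pow_left (by norm_num) j
  omega

theorem stmt_3 (k : ℕ) (hk : 1 ≤ k) (p : Fin k → ℕ) (hp : ∀ i, (p i).Prime)
    (hinj : Function.Injective p) (n n' : ℕ) (hn : n = ∏ i, p i)
    (hn' : n' = ∏ i : Fin (k - 1), p (Fin.castLE (Nat.sub_le k 1) i)) :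
    (divisorGraph n).edgeFinset.card =
      (divisorGraph n').edgeFinset.card + (2 * 3 ^ (k - 1) - 2 ^ (k - 1)) := by
  subst hn hn'
  rw [key k p hp hinj,
    key (k - 1) (fun i => p (Fin.castLE (Nat.sub_le k 1) i)) (fun i => hp _)
      (hinj.comp (Fin.castLE_injective _))]
  obtain ⟨j, rfl⟩ : ∃ j, k = j + 1 := ⟨k - 1, (Nat.succ_pred_eq_of_pos hk).symm⟩
  simp only [Nat.add_sub_cancel]
  have h23 : (2:ℕ) ^ j ≤ 3 ^ j := Nat.pow_le_pow_left (by norm_num) j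
  rw [pow_succ, pow_succ]
  omega
end

section
/- Let k be a natural number, let p₁,…,p_k be distinct primes and n = p₁⋯p_k. Then the k-dprime divisor function graph Γ_k has exactly 3^k − 2^k edges. -/
open Nat ArithmeticFunction in
lemma aux_pairwise (k : ℕ) (p : Fin k → ℕ) (hp : ∀ i, (p i).Prime)
    (hinj : Function.Injective p) :
    ((Finset.univ : Finset (Fin k)) : Set (Fin k)).Pairwise (Function.onFun Nat.Coprime p) :=
  fun i _ j _ hij => (Nat.coprime_primes (hp i) (hp j)).2 fun h => hij (hinj h)

open Nat ArithmeticFunction ArithmeticFunction.zeta ArithmeticFunction.sigma in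
lemma aux_sum_card (k : ℕ) (p : Fin k → ℕ) (hp : ∀ i, (p i).Prime)
    (hinj : Function.Injective p) :
    ∑ v ∈ (∏ i, p i).divisors, v.divisors.card = 3 ^ k := by
  classical
  have hmul : (ζ * σ 0).IsMultiplicative :=
    isMultiplicative_zeta.mul isMultiplicative_sigma
  have h1 : (ζ * σ 0) (∏ i, p i) = ∑ v ∈ (∏ i, p i).divisors, v.divisors.card := by
    rw [zeta_mul_apply]
    exact Finset.sum_congr rfl fun v _ => by rw [sigma_zero_apply]
  rw [← h1, hmul.map_prod p Finset.univ (aux_pairwise k p hp hinj)]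
  have h2 : ∀ i, (ζ * σ 0) (p i) = 3 := by
    intro i
    rw [zeta_mul_apply, (hp i).divisors, Finset.sum_pair (hp i).one_lt.ne,
      sigma_zero_apply, sigma_zero_apply, Nat.divisors_one, (hp i).divisors]
    rw [Finset.card_singleton, Finset.card_pair (hp i).one_lt.ne]
  simp [h2, Finset.prod_const, Finset.card_univ]

open Nat ArithmeticFunction ArithmeticFunction.zeta ArithmeticFunction.sigma in
lemma aux_card (k : ℕ) (p : Fin k → ℕ) (hp : ∀ i, (p i).Prime)
    (hinj : Function.Injective p) :
    (∏ i, p i).divisors.card = 2 ^ k := by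
  classical
  have h1 := (isMultiplicative_sigma (k := 0)).map_prod p Finset.univ
    (aux_pairwise k p hp hinj)
  rw [sigma_zero_apply] at h1
  rw [h1]
  have h2 : ∀ i, σ 0 (p i) = 2 := by
    intro i
    rw [sigma_zero_apply, (hp i).divisors, Finset.card_pair (hp i).one_lt.ne]
  simp [h2, Finset.prod_const, Finset.card_univ]

theorem stmt_4 (k : ℕ) (p : Fin k → ℕ) (hp : ∀ i, (p i).Prime)
    (hinj : Function.Injective p) (n : ℕ) (hn : n = ∏ i, p i) :
    (divisorGraph n).edgeFinset.card = 3 ^ k - 2 ^ k := by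
  classical
  have hn0 : n ≠ 0 := by
    rw [hn]
    exact Finset.prod_ne_zero_iff.2 fun i _ => (hp i).pos.ne'
  set T : Finset (ℕ × ℕ) :=
    (n.divisors ×ˢ n.divisors).filter (fun q => q.1 ∣ q.2 ∧ q.1 ≠ q.2) with hT
  have hmemT : ∀ q : ℕ × ℕ, q ∈ T ↔
      q.1 ∈ n.divisors ∧ q.2 ∈ n.divisors ∧ q.1 ∣ q.2 ∧ q.1 ≠ q.2 := by
    intro q
    simp [hT, Finset.mem_filter, Finset.mem_product, and_assoc]
  -- bijection between T and the edge set
  have hcard : T.card = (divisorGraph n).edgeFinset.card := by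
    apply Finset.card_bij (t := (divisorGraph n).edgeFinset) (fun q hq =>
      s(⟨q.1, ((hmemT q).1 hq).1⟩, ⟨q.2, ((hmemT q).1 hq).2.1⟩))
    · intro q hq
      obtain ⟨h1, h2, hdvd, hne⟩ := (hmemT q).1 hq
      rw [SimpleGraph.mem_edgeFinset]
      exact ⟨fun h => hne (congrArg Subtype.val h), Or.inl hdvd⟩
    · intro a ha b hb heq
      obtain ⟨_, _, hadvd, hane⟩ := (hmemT a).1 ha
      obtain ⟨_, _, hbdvd, hbne⟩ := (hmemT b).1 hb
      rw [Sym2.eq_iff] at heq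
      rcases heq with ⟨h1, h2⟩ | ⟨h1, h2⟩
      · exact Prod.ext (congrArg Subtype.val h1) (congrArg Subtype.val h2)
      · exfalso
        have e1 : a.1 = b.2 := congrArg Subtype.val h1
        have e2 : a.2 = b.1 := congrArg Subtype.val h2
        rw [e1, e2] at hadvd hane
        exact hane (Nat.dvd_antisymm hbdvd hadvd).symm
    · intro e he
      induction e using Sym2.ind with
      | _ u v =>
        rw [SimpleGraph.mem_edgeFinset] at he
        obtain ⟨hne, hor⟩ := he
        have hne' : (u : ℕ) ≠ (v : ℕ) := fun h => hne (Subtype.ext h)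
        rcases hor with hdvd | hdvd
        · exact ⟨(u.1, v.1), (hmemT _).2 ⟨u.2, v.2, hdvd, hne'⟩, rfl⟩
        · exact ⟨(v.1, u.1), (hmemT _).2 ⟨v.2, u.2, hdvd, hne'.symm⟩, Sym2.eq_swap⟩
  -- counting T
  have hTcard : T.card = ∑ v ∈ n.divisors, (v.divisors.card - 1) := by
    rw [hT, Finset.card_filter, Finset.sum_product, Finset.sum_comm]
    refine Finset.sum_congr rfl fun v hv => ?_
    rw [← Finset.card_filter]
    have hv0 : v ≠ 0 := Nat.pos_of_mem_divisors hv |>.ne'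
    have hvd : v ∣ n := Nat.dvd_of_mem_divisors hv
    have : n.divisors.filter (fun u => u ∣ v ∧ u ≠ v) = v.divisors.erase v := by
      ext u
      simp only [Finset.mem_filter, Finset.mem_erase, Nat.mem_divisors]
      constructor
      · rintro ⟨⟨_, _⟩, hd, hne⟩
        exact ⟨hne, hd, hv0⟩
      · rintro ⟨hne, hd, _⟩
        exact ⟨⟨hd.trans hvd, hn0⟩, hd, hne⟩
    rw [this, Finset.card_erase_of_mem (Nat.mem_divisors_self v hv0)]
  rw [← hcard, hTcard,
    Finset.sum_tsub_distrib _ (fun v hv =>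
      Finset.card_pos.2 ⟨1, Nat.one_mem_divisors.2 (Nat.pos_of_mem_divisors hv).ne'⟩)]
  simp only [Finset.sum_const, smul_eq_mul]
  rw [hn, aux_sum_card k p hp hinj, aux_card k p hp hinj]
  omega
end

section
/- Let k be a natural number, let p₁,…,p_k be distinct primes and n = p₁⋯p_k. Then the Harary index of the k-dprime divisor function graph Γ_k equals (2^{k−1}·(2^k − 3) + 3^k)/2, as a rational number. -/
open Finset ArithmeticFunction
open scoped ArithmeticFunction.sigma ArithmeticFunction.zeta

private lemma sym2_sum_half {ι : Type*} [LinearOrder ι] (s : Finset ι)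
    (f : ι → ι → ℚ) (hsymm : ∀ u v, f u v = f v u) (hdiag : ∀ u, f u u = 0)
    (F : Sym2 ι → ℚ) (hF : ∀ u v, F s(u, v) = f u v) :
    ∑ e ∈ s.sym2, F e = (∑ u ∈ s, ∑ v ∈ s, f u v) / 2 := by
  classical
  have hdiagsum : ∑ e ∈ s.sym2 with e.IsDiag, F e = 0 := by
    refine Finset.sum_eq_zero fun e he => ?_
    rw [Finset.mem_filter] at he
    induction e using Sym2.ind with
    | _ a b =>
      obtain rfl : a = b := (Sym2.mk_isDiag_iff).mp he.2
      rw [hF, hdiag]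
  have hsplit : ∑ e ∈ s.sym2, F e = ∑ i ∈ s.offDiag with i.1 < i.2, f i.1 i.2 := by
    rw [← Finset.sum_filter_add_sum_filter_not s.sym2 Sym2.IsDiag F, hdiagsum, zero_add,
      Finset.sum_sym2_filter_not_isDiag]
    exact Finset.sum_congr rfl fun i _ => hF i.1 i.2
  have hswap : ∑ i ∈ s.offDiag with ¬ i.1 < i.2, f i.1 i.2
      = ∑ i ∈ s.offDiag with i.1 < i.2, f i.1 i.2 := by
    refine Finset.sum_nbij' (fun x => Prod.swap x) (fun x => Prod.swap x) ?_ ?_ ?_ ?_ ?_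
    · rintro ⟨a, b⟩ hx
      simp only [Finset.mem_filter, Finset.mem_offDiag] at hx ⊢
      exact ⟨⟨hx.1.2.1, hx.1.1, hx.1.2.2.symm⟩, lt_of_le_of_ne (not_lt.mp hx.2) hx.1.2.2.symm⟩
    · rintro ⟨a, b⟩ hx
      simp only [Finset.mem_filter, Finset.mem_offDiag] at hx ⊢
      exact ⟨⟨hx.1.2.1, hx.1.1, hx.1.2.2.symm⟩, not_lt.mpr hx.2.le⟩
    · rintro ⟨a, b⟩ _; rfl
    · rintro ⟨a, b⟩ _; rfl
    · rintro ⟨a, b⟩ _; exact hsymm a b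
  have hdiag2 : ∑ x ∈ s.diag, f x.1 x.2 = 0 := by
    refine Finset.sum_eq_zero fun x hx => ?_
    rw [Finset.mem_diag] at hx
    rw [hx.2, hdiag]
  have hprod : ∑ u ∈ s, ∑ v ∈ s, f u v = ∑ x ∈ s ×ˢ s, f x.1 x.2 := by
    rw [← Finset.sum_product']
  rw [hsplit, hprod, ← Finset.diag_union_offDiag s,
    Finset.sum_union (Finset.disjoint_diag_offDiag s), hdiag2, zero_add,
    ← Finset.sum_filter_add_sum_filter_not s.offDiag (fun i => i.1 < i.2) (fun i => f i.1 i.2),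
    hswap]
  ring

private lemma prime_pairwise {k : ℕ} (p : Fin k → ℕ) (hp : ∀ i, (p i).Prime)
    (hinj : Function.Injective p) :
    (↑(Finset.univ : Finset (Fin k)) : Set (Fin k)).Pairwise (Function.onFun Nat.Coprime p) :=
  fun i _ j _ hij => (Nat.coprime_primes (hp i) (hp j)).mpr fun h => hij (hinj h)

private lemma sigma0_prime {q : ℕ} (hq : q.Prime) : σ 0 q = 2 := by
  rw [sigma_zero_apply, hq.divisors, Finset.card_insert_of_notMem (by
    simp [hq.one_lt.ne]), Finset.card_singleton]

private lemma card_divisors_prod {k : ℕ} (p : Fin k → ℕ) (hp : ∀ i, (p i).Prime)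
    (hinj : Function.Injective p) :
    (∏ i, p i).divisors.card = 2 ^ k := by
  have h := ArithmeticFunction.IsMultiplicative.map_prod p
    (isMultiplicative_sigma (k := 0)) Finset.univ (prime_pairwise p hp hinj)
  rw [← sigma_zero_apply, h]
  rw [Finset.prod_congr rfl fun i _ => sigma0_prime (hp i), Finset.prod_const,
    Finset.card_univ, Fintype.card_fin]

private lemma sum_card_divisors_prod {k : ℕ} (p : Fin k → ℕ) (hp : ∀ i, (p i).Prime)
    (hinj : Function.Injective p) :
    ∑ v ∈ (∏ i, p i).divisors, v.divisors.card = 3 ^ k := by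
  have hmul : (σ 0 * ζ).IsMultiplicative :=
    (isMultiplicative_sigma (k := 0)).mul isMultiplicative_zeta
  have h := ArithmeticFunction.IsMultiplicative.map_prod p hmul Finset.univ
    (prime_pairwise p hp hinj)
  have hval : ∀ i, (σ 0 * ζ) (p i) = 3 := by
    intro i
    rw [mul_zeta_apply, (hp i).divisors, Finset.sum_insert (by simp [(hp i).one_lt.ne]),
      Finset.sum_singleton, sigma0_prime (hp i)]
    simp [sigma_zero_apply, Nat.divisors_one]
  have hlhs : (σ 0 * ζ) (∏ i, p i) = ∑ v ∈ (∏ i, p i).divisors, v.divisors.card := by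
    rw [mul_zeta_apply]
    exact Finset.sum_congr rfl fun v _ => sigma_zero_apply v
  rw [← hlhs, h, Finset.prod_congr rfl fun i _ => hval i, Finset.prod_const,
    Finset.card_univ, Fintype.card_fin]

private lemma dist_two {n : ℕ} (hn0 : n ≠ 0) {u v : {d : ℕ // d ∈ n.divisors}}
    (huv : u ≠ v) (h1 : ¬ (u:ℕ) ∣ (v:ℕ)) (h2 : ¬ (v:ℕ) ∣ (u:ℕ)) :
    (divisorGraph n).dist u v = 2 := by
  set one : {d : ℕ // d ∈ n.divisors} := ⟨1, Nat.one_mem_divisors.mpr hn0⟩ with hone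
  have hu1 : u ≠ one := by
    rintro rfl; exact h1 (one_dvd _)
  have hv1 : v ≠ one := by
    rintro rfl; exact h2 (one_dvd _)
  have a1 : (divisorGraph n).Adj u one := ⟨hu1, Or.inr (one_dvd _)⟩
  have a2 : (divisorGraph n).Adj one v := ⟨fun h => hv1 h.symm, Or.inl (one_dvd _)⟩
  let w : (divisorGraph n).Walk u v :=
    SimpleGraph.Walk.cons a1 (SimpleGraph.Walk.cons a2 SimpleGraph.Walk.nil)
  have hle : (divisorGraph n).dist u v ≤ 2 := by
    have := SimpleGraph.dist_le w
    simpa [w] using this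
  have hne0 : (divisorGraph n).dist u v ≠ 0 := by
    intro h
    rcases SimpleGraph.dist_eq_zero_iff_eq_or_not_reachable.mp h with h' | h'
    · exact huv h'
    · exact h' ⟨w⟩
  have hne1 : (divisorGraph n).dist u v ≠ 1 := by
    intro h
    rcases (SimpleGraph.dist_eq_one_iff_adj.mp h).2 with hd | hd
    · exact h1 hd
    · exact h2 hd
  omega

/-- The Harary index: the sum of reciprocals of graph distances over all unordered pairs
of vertices (pairs `{u,u}` contribute `1/0 = 0` in `ℚ`). -/
theorem stmt_9 (k : ℕ) (p : Fin k → ℕ) (hp : ∀ i, (p i).Prime)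
    (hinj : Function.Injective p) (n : ℕ) (hn : n = ∏ i, p i) :
    ∑ e ∈ (Finset.univ : Finset {d : ℕ // d ∈ n.divisors}).sym2,
      Sym2.lift ⟨fun u v => (1 : ℚ) / ((divisorGraph n).dist u v : ℚ),
        fun u v => by beta_reduce; rw [SimpleGraph.dist_comm]⟩ e =
      ((2 : ℚ) ^ ((k : ℤ) - 1) * (2 ^ k - 3) + 3 ^ k) / 2 := by
  have hn0 : n ≠ 0 := by
    rw [hn]; exact Finset.prod_ne_zero_iff.mpr fun i _ => (hp i).ne_zero
  have hcard : n.divisors.card = 2 ^ k := by rw [hn]; exact card_divisors_prod p hp hinj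
  have hsum3 : ∑ v ∈ n.divisors, v.divisors.card = 3 ^ k := by
    rw [hn]; exact sum_card_divisors_prod p hp hinj
  set V := {d : ℕ // d ∈ n.divisors} with hV
  have hcardV : Fintype.card V = 2 ^ k :=
    (Fintype.card_coe n.divisors).trans hcard
  set f : V → V → ℚ := fun u v => (1 : ℚ) / ((divisorGraph n).dist u v : ℚ) with hfdef
  have hsymm : ∀ u v : V, f u v = f v u := fun u v => by
    simp only [hfdef, SimpleGraph.dist_comm]
  have hdiag : ∀ u : V, f u u = 0 := fun u => by
    simp [hfdef, SimpleGraph.dist_self]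
  rw [sym2_sum_half Finset.univ f hsymm hdiag _ (fun u v => Sym2.lift_mk ..)]
  have hkey : ∀ u v : V, f u v = 1/2 + (if (u:ℕ) ∣ (v:ℕ) then (1:ℚ)/2 else 0)
      + (if (v:ℕ) ∣ (u:ℕ) then (1:ℚ)/2 else 0) - (if u = v then (3:ℚ)/2 else 0) := by
    intro u v
    by_cases huv : u = v
    · subst huv
      norm_num [hfdef, SimpleGraph.dist_self]
    · by_cases h1 : (u:ℕ) ∣ (v:ℕ)
      · have h2 : ¬ (v:ℕ) ∣ (u:ℕ) := fun h => huv (Subtype.ext (Nat.dvd_antisymm h1 h))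
        have hd : (divisorGraph n).dist u v = 1 :=
          SimpleGraph.dist_eq_one_iff_adj.mpr ⟨huv, Or.inl h1⟩
        norm_num [hfdef, hd, h1, h2, huv]
      · by_cases h2 : (v:ℕ) ∣ (u:ℕ)
        · have hd : (divisorGraph n).dist u v = 1 :=
            SimpleGraph.dist_eq_one_iff_adj.mpr ⟨huv, Or.inr h2⟩
          norm_num [hfdef, hd, h1, h2, huv]
        · have hd := dist_two hn0 huv h1 h2
          norm_num [hfdef, hd, h1, h2, huv]
  rw [Finset.sum_congr rfl fun u _ => Finset.sum_congr rfl fun v _ => hkey u v]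
  simp only [Finset.sum_add_distrib, Finset.sum_sub_distrib]
  have E1 : ∑ _u : V, ∑ _v : V, (1:ℚ)/2 = (2:ℚ)^k * (2:ℚ)^k / 2 := by
    simp only [Finset.sum_const, Finset.card_univ, nsmul_eq_mul, hcardV]
    push_cast
    ring
  have E2 : ∑ u : V, ∑ v : V, (if (u:ℕ) ∣ (v:ℕ) then (1:ℚ)/2 else 0) = (3:ℚ)^k / 2 := by
    rw [Finset.sum_comm]
    have inner : ∀ v : V, ∑ u : V, (if (u:ℕ) ∣ (v:ℕ) then (1:ℚ)/2 else 0)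
        = ((v:ℕ).divisors.card : ℚ)/2 := by
      intro v
      have hv0 : (v:ℕ) ≠ 0 := fun h =>
        hn0 (by simpa [h, zero_dvd_iff] using (Nat.mem_divisors.mp v.2).1)
      have hfil : n.divisors.filter (· ∣ (v:ℕ)) = (v:ℕ).divisors := by
        ext u
        simp only [Finset.mem_filter, Nat.mem_divisors]
        constructor
        · rintro ⟨⟨_, _⟩, huv⟩; exact ⟨huv, hv0⟩
        · rintro ⟨huv, _⟩; exact ⟨⟨huv.trans (Nat.mem_divisors.mp v.2).1, hn0⟩, huv⟩
      rw [Finset.sum_coe_sort n.divisors (fun u => if u ∣ (v:ℕ) then (1:ℚ)/2 else 0),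
        Finset.sum_ite, Finset.sum_const, Finset.sum_const_zero, add_zero, hfil,
        nsmul_eq_mul]
      ring
    rw [Finset.sum_congr rfl fun v _ => inner v,
      Finset.sum_coe_sort n.divisors (fun v => ((v.divisors.card : ℚ))/2), ← Finset.sum_div,
      ← Nat.cast_sum, hsum3]
    push_cast
    ring
  have E3 : ∑ u : V, ∑ v : V, (if (v:ℕ) ∣ (u:ℕ) then (1:ℚ)/2 else 0) = (3:ℚ)^k / 2 := by
    rw [Finset.sum_comm]; exact E2
  have E4 : ∑ u : V, ∑ v : V, (if u = v then (3:ℚ)/2 else 0) = 3/2 * (2:ℚ)^k := by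
    simp only [Finset.sum_ite_eq, Finset.mem_univ, if_true, Finset.sum_const,
      Finset.card_univ, nsmul_eq_mul, hcardV]
    push_cast
    ring
  rw [E1, E2, E3, E4]
  have hz : (2:ℚ) ^ ((k:ℤ) - 1) = (2:ℚ)^k / 2 := by
    rw [zpow_sub₀ (two_ne_zero), zpow_natCast, zpow_one]
  rw [hz]
  ring
end

section
/- Let k ≥ 1, let p₁,…,p_k be distinct primes and n = p₁⋯p_k. Then the first Zagreb index of the k-dprime divisor function graph Γ_k equals 2·(2^k − 1)² + Σ_{j=1}^{k−1} C(k,j)·(2^j + 2^{k−j} − 2)², where C(k,j) is the binomial coefficient. -/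
open Finset

lemma fact_eval {s : Finset ℕ} (hs : ∀ p ∈ s, p.Prime) (q : ℕ) :
    (∏ p ∈ s, p).factorization q = if q ∈ s then 1 else 0 := by
  rw [Nat.factorization_prod (fun p hp => (hs p hp).ne_zero)]
  rw [Finsupp.finset_sum_apply]
  rw [Finset.sum_congr rfl (fun p hp => by
    rw [Nat.Prime.factorization (hs p hp), Finsupp.single_apply])]
  simp

lemma prod_ne_zero' {s : Finset ℕ} (hs : ∀ p ∈ s, p.Prime) : ∏ p ∈ s, p ≠ 0 :=
  Finset.prod_ne_zero_iff.2 fun p hp => (hs p hp).ne_zero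

lemma sqfree_prod {s : Finset ℕ} (hs : ∀ p ∈ s, p.Prime) : Squarefree (∏ p ∈ s, p) := by
  rw [Nat.squarefree_iff_factorization_le_one (prod_ne_zero' hs)]
  intro q
  rw [fact_eval hs]
  split <;> simp

lemma card_divisors_prod_s10 {s : Finset ℕ} (hs : ∀ p ∈ s, p.Prime) :
    (∏ p ∈ s, p).divisors.card = 2 ^ s.card := by
  rw [Nat.card_divisors (prod_ne_zero' hs), Nat.primeFactors_prod hs]
  rw [Finset.prod_congr rfl (fun q hq => by rw [fact_eval hs, if_pos hq])]
  simp

lemma cardB_eq {n d : ℕ} (hd : d ∈ n.divisors) :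
    (n.divisors.filter (fun u => d ∣ u)).card = (n / d).divisors.card := by
  obtain ⟨hdn, hn0⟩ := Nat.mem_divisors.1 hd
  have hd0 : d ≠ 0 := fun h => hn0 (by simpa [h] using hdn)
  have hnd0 : n / d ≠ 0 := fun h => hn0 (by rw [← Nat.div_mul_cancel hdn, h, zero_mul])
  have himg : n.divisors.filter (fun u => d ∣ u) = (n / d).divisors.image (d * ·) := by
    ext u
    simp only [Finset.mem_filter, Finset.mem_image, Nat.mem_divisors]
    constructor
    · rintro ⟨⟨hun, _⟩, e, rfl⟩
      exact ⟨e, ⟨(Nat.dvd_div_iff_mul_dvd hdn).2 hun, hnd0⟩, rfl⟩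
    · rintro ⟨e, ⟨hed, _⟩, rfl⟩
      refine ⟨⟨?_, hn0⟩, ⟨e, rfl⟩⟩
      have : d * e ∣ d * (n / d) := mul_dvd_mul_left d hed
      rwa [Nat.mul_div_cancel' hdn] at this
  rw [himg, Finset.card_image_of_injective _ (mul_right_injective₀ hd0)]

lemma degree_eq {n : ℕ} (v : {d : ℕ // d ∈ n.divisors}) :
    (divisorGraph n).degree v
      = (v : ℕ).divisors.card + (n / (v : ℕ)).divisors.card - 2 := by
  obtain ⟨d, hd⟩ := v
  obtain ⟨hdn, hn0⟩ := Nat.mem_divisors.1 hd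
  have hd0 : d ≠ 0 := fun h => hn0 (by simpa [h] using hdn)
  have hstep : (divisorGraph n).degree ⟨d, hd⟩
      = ((n.divisors.filter (fun u => u ∣ d ∨ d ∣ u)).erase d).card := by
    rw [← SimpleGraph.card_neighborFinset_eq_degree]
    refine Finset.card_bij (fun u _ => (u : ℕ)) ?_ ?_ ?_
    · intro u hu
      rw [SimpleGraph.mem_neighborFinset] at hu
      obtain ⟨hne, hdvd⟩ := hu
      refine Finset.mem_erase.2 ⟨fun h => hne (Subtype.ext h.symm), Finset.mem_filter.2 ⟨u.2, hdvd.symm⟩⟩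
    · intro a _ b _ h; exact Subtype.ext h
    · intro u hu
      rw [Finset.mem_erase, Finset.mem_filter] at hu
      exact ⟨⟨u, hu.2.1⟩, SimpleGraph.mem_neighborFinset _ _ _ |>.2
        ⟨fun h => hu.1 (congrArg Subtype.val h).symm, Or.symm hu.2.2⟩, rfl⟩
  rw [hstep]
  have hsplit : n.divisors.filter (fun u => u ∣ d ∨ d ∣ u)
      = d.divisors ∪ n.divisors.filter (fun u => d ∣ u) := by
    ext u
    simp only [Finset.mem_union, Finset.mem_filter, Nat.mem_divisors]
    constructor
    · rintro ⟨⟨hun, _⟩, h | h⟩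
      · exact Or.inl ⟨h, hd0⟩
      · exact Or.inr ⟨⟨hun, hn0⟩, h⟩
    · rintro (⟨h, _⟩ | ⟨h1, h2⟩)
      · exact ⟨⟨h.trans hdn, hn0⟩, Or.inl h⟩
      · exact ⟨h1, Or.inr h2⟩
  have hinter : d.divisors ∩ n.divisors.filter (fun u => d ∣ u) = {d} := by
    ext u
    simp only [Finset.mem_inter, Finset.mem_filter, Nat.mem_divisors, Finset.mem_singleton]
    constructor
    · rintro ⟨⟨h1, _⟩, _, h2⟩
      exact Nat.dvd_antisymm h1 h2
    · rintro rfl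
      exact ⟨⟨dvd_refl _, hd0⟩, ⟨hdn, hn0⟩, dvd_refl _⟩
  have hdin : d ∈ d.divisors ∪ n.divisors.filter (fun u => d ∣ u) :=
    Finset.mem_union.2 (Or.inl (Nat.mem_divisors.2 ⟨dvd_refl _, hd0⟩))
  dsimp only
  rw [hsplit, Finset.card_erase_of_mem hdin]
  have hu := Finset.card_union_add_card_inter d.divisors (n.divisors.filter (fun u => d ∣ u))
  rw [hinter, Finset.card_singleton] at hu
  have hb := cardB_eq hd
  omega

lemma sum_divisors_powerset {M : Type*} [AddCommMonoid M] {s : Finset ℕ}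
    (hs : ∀ p ∈ s, p.Prime) (f : ℕ → M) :
    ∑ d ∈ (∏ p ∈ s, p).divisors, f d = ∑ t ∈ s.powerset, f (∏ p ∈ t, p) := by
  have hn0 := prod_ne_zero' hs
  have hsq := sqfree_prod hs
  refine Finset.sum_nbij' (fun d => d.primeFactors) (fun t => ∏ p ∈ t, p) ?_ ?_ ?_ ?_ ?_
  · intro d hd
    rw [Finset.mem_powerset, ← Nat.primeFactors_prod hs]
    exact Nat.primeFactors_mono (Nat.mem_divisors.1 hd).1 hn0
  · intro t ht
    exact Nat.mem_divisors.2
      ⟨Finset.prod_dvd_prod_of_subset t s _ (Finset.mem_powerset.1 ht), hn0⟩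
  · intro d hd
    exact Nat.prod_primeFactors_of_squarefree
      (hsq.squarefree_of_dvd (Nat.mem_divisors.1 hd).1)
  · intro t ht
    exact Nat.primeFactors_prod (fun p hp => hs p (Finset.mem_powerset.1 ht hp))
  · intro d hd
    rw [Nat.prod_primeFactors_of_squarefree
      (hsq.squarefree_of_dvd (Nat.mem_divisors.1 hd).1)]

/-- The first Zagreb index: the sum of the squares of the vertex degrees. -/
theorem stmt_10 (k : ℕ) (hk : 1 ≤ k) (p : Fin k → ℕ) (hp : ∀ i, (p i).Prime)
    (hinj : Function.Injective p) (n : ℕ) (hn : n = ∏ i, p i) :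
    ∑ v : {d : ℕ // d ∈ n.divisors}, (divisorGraph n).degree v ^ 2 =
      2 * (2 ^ k - 1) ^ 2 +
        ∑ j ∈ Finset.Ico 1 k, Nat.choose k j * (2 ^ j + 2 ^ (k - j) - 2) ^ 2 := by
  set s : Finset ℕ := Finset.univ.image p with hsdef
  have hs : ∀ q ∈ s, q.Prime := by
    intro q hq
    obtain ⟨i, _, rfl⟩ := Finset.mem_image.1 hq
    exact hp i
  have hcard : s.card = k := by
    rw [hsdef, Finset.card_image_of_injective _ hinj, Finset.card_univ, Fintype.card_fin]
  have hns : n = ∏ q ∈ s, q := by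
    rw [hn, hsdef, Finset.prod_image (fun a _ b _ h => hinj h)]
  have hsq : Squarefree n := hns ▸ sqfree_prod hs
  have hn0 : n ≠ 0 := hsq.ne_zero
  -- reduce to a sum over divisors
  have h1 : ∑ v : {d : ℕ // d ∈ n.divisors}, (divisorGraph n).degree v ^ 2
      = ∑ d ∈ n.divisors, (d.divisors.card + (n / d).divisors.card - 2) ^ 2 := by
    rw [Finset.univ_eq_attach, ← Finset.sum_attach n.divisors
      (fun d => (d.divisors.card + (n / d).divisors.card - 2) ^ 2)]
    exact Finset.sum_congr rfl fun v _ => by rw [degree_eq]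
  rw [h1]
  have h2 : ∑ d ∈ n.divisors, (d.divisors.card + (n / d).divisors.card - 2) ^ 2
      = ∑ t ∈ s.powerset, (2 ^ t.card + 2 ^ (k - t.card) - 2) ^ 2 := by
    rw [hns, sum_divisors_powerset hs]
    refine Finset.sum_congr rfl fun t ht => ?_
    have hts := Finset.mem_powerset.1 ht
    have hts' : t ⊆ (∏ q ∈ s, q).primeFactors := by
      rw [Nat.primeFactors_prod hs]; exact hts
    have hA : (∏ q ∈ t, q).divisors.card = 2 ^ t.card :=
      card_divisors_prod_s10 (fun q hq => hs q (hts hq))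
    have hB : ((∏ q ∈ s, q) / ∏ q ∈ t, q).divisors.card = 2 ^ (k - t.card) := by
      rw [← Nat.prod_primeFactors_sdiff_of_squarefree (hns ▸ hsq) hts',
        Nat.primeFactors_prod hs,
        card_divisors_prod_s10 (fun q hq => hs q (Finset.mem_sdiff.1 hq).1),
        Finset.card_sdiff_of_subset hts, hcard]
    rw [hA, hB]
  rw [h2, Finset.sum_powerset]
  have h3 : ∀ j ∈ Finset.range (s.card + 1),
      ∑ t ∈ Finset.powersetCard j s, (2 ^ t.card + 2 ^ (k - t.card) - 2) ^ 2
        = Nat.choose k j * (2 ^ j + 2 ^ (k - j) - 2) ^ 2 := by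
    intro j _
    rw [Finset.sum_congr rfl (fun t ht => by
      rw [(Finset.mem_powersetCard.1 ht).2]), Finset.sum_const,
      Finset.card_powersetCard, hcard, smul_eq_mul]
  rw [Finset.sum_congr rfl h3, hcard]
  rw [Finset.sum_range_succ]
  rw [Finset.range_eq_Ico, Finset.sum_eq_sum_Ico_succ_bot hk]
  have e0 : Nat.choose k 0 * (2 ^ 0 + 2 ^ (k - 0) - 2) ^ 2 = (2 ^ k - 1) ^ 2 := by
    have : (1 : ℕ) ≤ 2 ^ k := Nat.one_le_two_pow
    rw [Nat.choose_zero_right, one_mul, pow_zero, Nat.sub_zero]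
    congr 1
    omega
  have ek : Nat.choose k k * (2 ^ k + 2 ^ (k - k) - 2) ^ 2 = (2 ^ k - 1) ^ 2 := by
    have : (1 : ℕ) ≤ 2 ^ k := Nat.one_le_two_pow
    rw [Nat.choose_self, one_mul, Nat.sub_self, pow_zero]
    congr 1
  rw [e0, ek]
  simp only [zero_add]
  ring
end

section
/- Let p, q, r be distinct primes and n = pqr. Then the harmonic index of the 3-dprime divisor function graph Γ₃ equals 589/154. -/
namespace DPrimeAux

abbrev V30 := {d : ℕ // d ∈ (30:ℕ).divisors}
def d1 : V30 := ⟨1, by decide⟩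
def d2 : V30 := ⟨2, by decide⟩
def d3 : V30 := ⟨3, by decide⟩
def d5 : V30 := ⟨5, by decide⟩
def d6 : V30 := ⟨6, by decide⟩
def d10 : V30 := ⟨10, by decide⟩
def d15 : V30 := ⟨15, by decide⟩
def d30 : V30 := ⟨30, by decide⟩

def E30 : Finset (Sym2 V30) :=
  {s(d1,d2), s(d1,d3), s(d1,d5), s(d1,d6), s(d1,d10), s(d1,d15), s(d1,d30),
   s(d2,d6), s(d2,d10), s(d2,d30), s(d3,d6), s(d3,d15), s(d3,d30),
   s(d5,d10), s(d5,d15), s(d5,d30), s(d6,d30), s(d10,d30), s(d15,d30)}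

theorem base30 :
    ∑ e ∈ (divisorGraph 30).edgeFinset,
      Sym2.lift ⟨fun u v =>
          (2 : ℚ) / (((divisorGraph 30).degree u : ℚ) + ((divisorGraph 30).degree v : ℚ)),
        fun u v => by beta_reduce; rw [add_comm (((divisorGraph 30).degree u : ℚ))]⟩ e =
      589 / 154 := by
  have h1 : (divisorGraph 30).degree d1 = 7 := by decide
  have h2 : (divisorGraph 30).degree d2 = 4 := by decide
  have h3 : (divisorGraph 30).degree d3 = 4 := by decide
  have h5 : (divisorGraph 30).degree d5 = 4 := by decide
  have h6 : (divisorGraph 30).degree d6 = 4 := by decide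
  have h10 : (divisorGraph 30).degree d10 = 4 := by decide
  have h15 : (divisorGraph 30).degree d15 = 4 := by decide
  have h30 : (divisorGraph 30).degree d30 = 7 := by decide
  rw [show (divisorGraph 30).edgeFinset = E30 from by decide]
  unfold E30
  repeat rw [Finset.sum_insert (by decide)]
  rw [Finset.sum_singleton]
  simp only [Sym2.lift_mk, h1, h2, h3, h5, h6, h10, h15, h30]
  norm_num

theorem fact3 {x y z : ℕ} (hx : x.Prime) (hy : y.Prime) (hz : z.Prime) (a b c : ℕ) :
    (x ^ a * y ^ b * z ^ c).factorization =
      Finsupp.single x a + Finsupp.single y b + Finsupp.single z c := by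
  rw [Nat.factorization_mul
      (mul_ne_zero (pow_ne_zero _ hx.pos.ne') (pow_ne_zero _ hy.pos.ne'))
      (pow_ne_zero _ hz.pos.ne'),
    Nat.factorization_mul (pow_ne_zero _ hx.pos.ne') (pow_ne_zero _ hy.pos.ne'),
    hx.factorization_pow, hy.factorization_pow, hz.factorization_pow]

theorem dvd3 {x y z : ℕ} (hx : x.Prime) (hy : y.Prime) (hz : z.Prime)
    (hxy : x ≠ y) (hxz : x ≠ z) (hyz : y ≠ z) (a b c a' b' c' : ℕ) :
    x ^ a * y ^ b * z ^ c ∣ x ^ a' * y ^ b' * z ^ c' ↔ a ≤ a' ∧ b ≤ b' ∧ c ≤ c' := by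
  constructor
  · intro h
    have h2 := (Nat.factorization_le_iff_dvd
      (mul_ne_zero (mul_ne_zero (pow_ne_zero _ hx.pos.ne') (pow_ne_zero _ hy.pos.ne'))
        (pow_ne_zero _ hz.pos.ne'))
      (mul_ne_zero (mul_ne_zero (pow_ne_zero _ hx.pos.ne') (pow_ne_zero _ hy.pos.ne'))
        (pow_ne_zero _ hz.pos.ne'))).mpr h
    rw [fact3 hx hy hz, fact3 hx hy hz, Finsupp.le_def] at h2
    refine ⟨?_, ?_, ?_⟩
    · simpa [Finsupp.single_apply, hxy, hxz, hyz, hxy.symm, hxz.symm, hyz.symm] using h2 x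
    · simpa [Finsupp.single_apply, hxy, hxz, hyz, hxy.symm, hxz.symm, hyz.symm] using h2 y
    · simpa [Finsupp.single_apply, hxy, hxz, hyz, hxy.symm, hxz.symm, hyz.symm] using h2 z
  · rintro ⟨ha, hb, hc⟩
    exact mul_dvd_mul (mul_dvd_mul (pow_dvd_pow _ ha) (pow_dvd_pow _ hb)) (pow_dvd_pow _ hc)

theorem bounds3 {x y z u : ℕ} (hx : x.Prime) (hy : y.Prime) (hz : z.Prime)
    (hxy : x ≠ y) (hxz : x ≠ z) (hyz : y ≠ z) (hu : u ∣ x * y * z) :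
    u.factorization x ≤ 1 ∧ u.factorization y ≤ 1 ∧ u.factorization z ≤ 1 := by
  have hn0 : x * y * z ≠ 0 :=
    mul_ne_zero (mul_ne_zero hx.pos.ne' hy.pos.ne') hz.pos.ne'
  have hu0 : u ≠ 0 := by rintro rfl; exact hn0 (zero_dvd_iff.mp hu)
  have h2 := (Nat.factorization_le_iff_dvd hu0 hn0).mpr hu
  rw [show x * y * z = x ^ 1 * y ^ 1 * z ^ 1 by ring, fact3 hx hy hz, Finsupp.le_def] at h2
  refine ⟨?_, ?_, ?_⟩
  · simpa [Finsupp.single_apply, hxy, hxz, hyz, hxy.symm, hxz.symm, hyz.symm] using h2 x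
  · simpa [Finsupp.single_apply, hxy, hxz, hyz, hxy.symm, hxz.symm, hyz.symm] using h2 y
  · simpa [Finsupp.single_apply, hxy, hxz, hyz, hxy.symm, hxz.symm, hyz.symm] using h2 z

theorem repr3 {x y z u : ℕ} (hx : x.Prime) (hy : y.Prime) (hz : z.Prime)
    (hxy : x ≠ y) (hxz : x ≠ z) (hyz : y ≠ z) (hu : u ∣ x * y * z) :
    u = x ^ u.factorization x * y ^ u.factorization y * z ^ u.factorization z := by
  have hn0 : x * y * z ≠ 0 :=
    mul_ne_zero (mul_ne_zero hx.pos.ne' hy.pos.ne') hz.pos.ne'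
  have hu0 : u ≠ 0 := by rintro rfl; exact hn0 (zero_dvd_iff.mp hu)
  refine Nat.eq_of_factorization_eq hu0
    (mul_ne_zero (mul_ne_zero (pow_ne_zero _ hx.pos.ne') (pow_ne_zero _ hy.pos.ne'))
      (pow_ne_zero _ hz.pos.ne')) fun s => ?_
  rw [fact3 hx hy hz]
  rcases eq_or_ne s x with rfl | hsx
  · simp [Finsupp.single_apply, hxy, hxz, hyz, hxy.symm, hxz.symm, hyz.symm]
  rcases eq_or_ne s y with rfl | hsy
  · simp [Finsupp.single_apply, hxy, hxz, hyz, hxy.symm, hxz.symm, hyz.symm]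
  rcases eq_or_ne s z with rfl | hsz
  · simp [Finsupp.single_apply, hxy, hxz, hyz, hxy.symm, hxz.symm, hyz.symm]
  have h0 : u.factorization s = 0 := by
    by_contra h
    have hs : s ∈ u.primeFactors := by
      rw [← Nat.support_factorization]; exact Finsupp.mem_support_iff.mpr h
    have hsp := Nat.prime_of_mem_primeFactors hs
    have hsd : s ∣ x * y * z := (Nat.dvd_of_mem_primeFactors hs).trans hu
    rcases hsp.dvd_mul.mp hsd with h' | h'
    · rcases hsp.dvd_mul.mp h' with h'' | h''
      · exact hsx ((Nat.prime_dvd_prime_iff_eq hsp hx).mp h'')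
      · exact hsy ((Nat.prime_dvd_prime_iff_eq hsp hy).mp h'')
    · exact hsz ((Nat.prime_dvd_prime_iff_eq hsp hz).mp h')
  simp [h0, Finsupp.single_apply, hsx.symm, hsy.symm, hsz.symm]

theorem eval3 {x y z : ℕ} (hx : x.Prime) (hy : y.Prime) (hz : z.Prime)
    (hxy : x ≠ y) (hxz : x ≠ z) (hyz : y ≠ z) (a b c : ℕ) :
    (x ^ a * y ^ b * z ^ c).factorization x = a ∧
    (x ^ a * y ^ b * z ^ c).factorization y = b ∧
    (x ^ a * y ^ b * z ^ c).factorization z = c := by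
  rw [fact3 hx hy hz]
  refine ⟨?_, ?_, ?_⟩ <;>
    simp [Finsupp.single_apply, hxy, hxz, hyz, hxy.symm, hxz.symm, hyz.symm]

end DPrimeAux

open DPrimeAux in
/-- The harmonic index of `Γ₃`: the sum over all edges of `2 / (deg u + deg v)`. -/
theorem stmt_14 (p q r : ℕ) (hp : p.Prime) (hq : q.Prime) (hr : r.Prime)
    (hpq : p ≠ q) (hpr : p ≠ r) (hqr : q ≠ r) (n : ℕ) (hn : n = p * q * r) :
    ∑ e ∈ (divisorGraph n).edgeFinset,
      Sym2.lift ⟨fun u v =>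
          (2 : ℚ) / (((divisorGraph n).degree u : ℚ) + ((divisorGraph n).degree v : ℚ)),
        fun u v => by beta_reduce; rw [add_comm (((divisorGraph n).degree u : ℚ))]⟩ e =
      589 / 154 := by
  subst hn
  have h2 : Nat.Prime 2 := by norm_num
  have h3 : Nat.Prime 3 := by norm_num
  have h5 : Nat.Prime 5 := by norm_num
  have h23 : (2:ℕ) ≠ 3 := by norm_num
  have h25 : (2:ℕ) ≠ 5 := by norm_num
  have h35 : (3:ℕ) ≠ 5 := by norm_num
  -- the forward map
  have hmem : ∀ u : {d : ℕ // d ∈ (p * q * r).divisors}, (u : ℕ) ∣ p * q * r :=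
    fun u => (Nat.mem_divisors.mp u.2).1
  have hmem30 : ∀ u : V30, (u : ℕ) ∣ 30 := fun u => (Nat.mem_divisors.mp u.2).1
  let F : {d : ℕ // d ∈ (p * q * r).divisors} ≃ V30 :=
    { toFun := fun u => ⟨2 ^ (u : ℕ).factorization p * 3 ^ (u : ℕ).factorization q *
        5 ^ (u : ℕ).factorization r, by
        obtain ⟨b1, b2, b3⟩ := bounds3 hp hq hr hpq hpr hqr (hmem u)
        refine Nat.mem_divisors.mpr ⟨?_, by norm_num⟩
        rw [show (30:ℕ) = 2 ^ 1 * 3 ^ 1 * 5 ^ 1 by norm_num]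
        exact (dvd3 h2 h3 h5 h23 h25 h35 _ _ _ _ _ _).mpr ⟨b1, b2, b3⟩⟩
      invFun := fun u => ⟨p ^ (u : ℕ).factorization 2 * q ^ (u : ℕ).factorization 3 *
        r ^ (u : ℕ).factorization 5, by
        have hu235 : (u : ℕ) ∣ 2 * 3 * 5 := by
          rw [show (2:ℕ) * 3 * 5 = 30 from by norm_num]; exact hmem30 u
        obtain ⟨b1, b2, b3⟩ := bounds3 h2 h3 h5 h23 h25 h35 hu235
        refine Nat.mem_divisors.mpr ⟨?_,
          mul_ne_zero (mul_ne_zero hp.pos.ne' hq.pos.ne') hr.pos.ne'⟩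
        rw [show p * q * r = p ^ 1 * q ^ 1 * r ^ 1 by ring]
        exact (dvd3 hp hq hr hpq hpr hqr _ _ _ _ _ _).mpr ⟨b1, b2, b3⟩⟩
      left_inv := fun u => by
        apply Subtype.ext
        obtain ⟨e1, e2, e3⟩ := eval3 h2 h3 h5 h23 h25 h35
          ((u : ℕ).factorization p) ((u : ℕ).factorization q) ((u : ℕ).factorization r)
        show p ^ _ * q ^ _ * r ^ _ = (u : ℕ)
        rw [e1, e2, e3]
        exact (repr3 hp hq hr hpq hpr hqr (hmem u)).symm
      right_inv := fun u => by
        apply Subtype.ext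
        obtain ⟨e1, e2, e3⟩ := eval3 hp hq hr hpq hpr hqr
          ((u : ℕ).factorization 2) ((u : ℕ).factorization 3) ((u : ℕ).factorization 5)
        show 2 ^ _ * 3 ^ _ * 5 ^ _ = (u : ℕ)
        rw [e1, e2, e3]
        have := repr3 h2 h3 h5 h23 h25 h35
          (show (u : ℕ) ∣ 2 * 3 * 5 by rw [show (2:ℕ) * 3 * 5 = 30 by norm_num]; exact hmem30 u)
        exact this.symm }
  have hFval : ∀ u : {d : ℕ // d ∈ (p * q * r).divisors},
      (F u : ℕ) = 2 ^ (u : ℕ).factorization p * 3 ^ (u : ℕ).factorization q *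
        5 ^ (u : ℕ).factorization r := fun u => rfl
  have hdvd : ∀ u v : {d : ℕ // d ∈ (p * q * r).divisors},
      ((u : ℕ) ∣ (v : ℕ)) ↔ ((F u : ℕ) ∣ (F v : ℕ)) := by
    intro u v
    have hA := dvd3 hp hq hr hpq hpr hqr
      ((u : ℕ).factorization p) ((u : ℕ).factorization q) ((u : ℕ).factorization r)
      ((v : ℕ).factorization p) ((v : ℕ).factorization q) ((v : ℕ).factorization r)
    rw [← repr3 hp hq hr hpq hpr hqr (hmem u), ← repr3 hp hq hr hpq hpr hqr (hmem v)] at hA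
    have hB := dvd3 h2 h3 h5 h23 h25 h35
      ((u : ℕ).factorization p) ((u : ℕ).factorization q) ((u : ℕ).factorization r)
      ((v : ℕ).factorization p) ((v : ℕ).factorization q) ((v : ℕ).factorization r)
    rw [← hFval u, ← hFval v] at hB
    exact hA.trans hB.symm
  have hAdj : ∀ u v : {d : ℕ // d ∈ (p * q * r).divisors},
      (divisorGraph (p * q * r)).Adj u v ↔ (divisorGraph 30).Adj (F u) (F v) := by
    intro u v
    constructor
    · rintro ⟨hne, hd⟩
      exact ⟨fun h => hne (F.injective h), by rwa [← hdvd u v, ← hdvd v u]⟩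
    · rintro ⟨hne, hd⟩
      exact ⟨fun h => hne (congrArg F h), by rwa [← hdvd u v, ← hdvd v u] at hd⟩
  have hdeg : ∀ u, (divisorGraph 30).degree (F u) = (divisorGraph (p * q * r)).degree u := by
    intro u
    unfold SimpleGraph.degree
    apply Finset.card_nbij' (i := fun w => F.symm w) (j := fun w => F w)
    · intro a ha
      rw [Finset.mem_coe, SimpleGraph.mem_neighborFinset] at ha ⊢
      have h' := (hAdj u (F.symm a)).mpr
      rw [F.apply_symm_apply] at h'
      exact h' ha
    · intro a ha
      rw [Finset.mem_coe, SimpleGraph.mem_neighborFinset] at ha ⊢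
      exact (hAdj u a).mp ha
    · intro a _; exact F.apply_symm_apply a
    · intro a _; exact F.symm_apply_apply a
  refine Eq.trans ?_ base30
  refine Finset.sum_nbij' (i := Sym2.map F) (j := Sym2.map F.symm) ?_ ?_ ?_ ?_ ?_
  · intro e he
    induction e using Sym2.ind with
    | _ u v =>
      rw [Sym2.map_pair_eq, SimpleGraph.mem_edgeFinset, SimpleGraph.mem_edgeSet]
      rw [SimpleGraph.mem_edgeFinset, SimpleGraph.mem_edgeSet] at he
      exact (hAdj u v).mp he
  · intro e he
    induction e using Sym2.ind with
    | _ u v =>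
      rw [Sym2.map_pair_eq, SimpleGraph.mem_edgeFinset, SimpleGraph.mem_edgeSet]
      rw [SimpleGraph.mem_edgeFinset, SimpleGraph.mem_edgeSet] at he
      have h' := (hAdj (F.symm u) (F.symm v)).mpr
      rw [F.apply_symm_apply, F.apply_symm_apply] at h'
      exact h' he
  · intro e _
    induction e using Sym2.ind with
    | _ u v => simp [Sym2.map_pair_eq]
  · intro e _
    induction e using Sym2.ind with
    | _ u v => simp [Sym2.map_pair_eq]
  · intro e _
    induction e using Sym2.ind with
    | _ u v =>
      rw [Sym2.map_pair_eq, Sym2.lift_mk, Sym2.lift_mk]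
      show (2:ℚ) / (((divisorGraph (p * q * r)).degree u : ℚ) +
          ((divisorGraph (p * q * r)).degree v : ℚ)) =
        (2:ℚ) / (((divisorGraph 30).degree (F u) : ℚ) + ((divisorGraph 30).degree (F v) : ℚ))
      rw [hdeg u, hdeg v]
end

section
/- Let p₁, p₂, p₃, p₄ be distinct primes and n = p₁p₂p₃p₄. Then the harmonic index of the 4-dprime divisor function graph Γ₄ equals 36367/4830. -/
/-- Four distinct primes. -/
structure Quad (a b c d : ℕ) : Prop where
  pa : a.Prime
  pb : b.Prime
  pc : c.Prime
  pd : d.Prime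
  hab : a ≠ b
  hac : a ≠ c
  had : a ≠ d
  hbc : b ≠ c
  hbd : b ≠ d
  hcd : c ≠ d

namespace Quad

variable {a b c d : ℕ}

lemma nz (h : Quad a b c d) : a * b * c * d ≠ 0 := by
  have := h.pa.pos; have := h.pb.pos; have := h.pc.pos; have := h.pd.pos
  positivity

lemma primeFactors_eq (h : Quad a b c d) : (a * b * c * d).primeFactors = {a, b, c, d} := by
  rw [Nat.primeFactors_mul (by simp [h.pa.ne_zero, h.pb.ne_zero, h.pc.ne_zero]) h.pd.ne_zero,
    Nat.primeFactors_mul (by simp [h.pa.ne_zero, h.pb.ne_zero]) h.pc.ne_zero,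
    Nat.primeFactors_mul h.pa.ne_zero h.pb.ne_zero,
    h.pa.primeFactors, h.pb.primeFactors, h.pc.primeFactors, h.pd.primeFactors]
  ext t; simp [or_assoc]

lemma squarefree (h : Quad a b c d) : Squarefree (a * b * c * d) := by
  have cab := (Nat.coprime_primes h.pa h.pb).mpr h.hab
  have cac := (Nat.coprime_primes h.pa h.pc).mpr h.hac
  have cad := (Nat.coprime_primes h.pa h.pd).mpr h.had
  have cbc := (Nat.coprime_primes h.pb h.pc).mpr h.hbc
  have cbd := (Nat.coprime_primes h.pb h.pd).mpr h.hbd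
  have ccd := (Nat.coprime_primes h.pc h.pd).mpr h.hcd
  have s1 : Squarefree (a * b) :=
    (Nat.squarefree_mul cab).mpr ⟨h.pa.prime.squarefree, h.pb.prime.squarefree⟩
  have s2 : Squarefree (a * b * c) :=
    (Nat.squarefree_mul (Nat.Coprime.mul cac cbc)).mpr ⟨s1, h.pc.prime.squarefree⟩
  exact (Nat.squarefree_mul (Nat.Coprime.mul (Nat.Coprime.mul cad cbd) ccd)).mpr
    ⟨s2, h.pd.prime.squarefree⟩

lemma prod_eq (h : Quad a b c d) : ∏ q ∈ ({a, b, c, d} : Finset ℕ), q = a * b * c * d := by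
  rw [Finset.prod_insert (by simp [h.hab, h.hac, h.had]),
    Finset.prod_insert (by simp [h.hbc, h.hbd]),
    Finset.prod_insert (by simp [h.hcd]), Finset.prod_singleton]
  ring

lemma dvd_iff_subset (h : Quad a b c d) {u v : ℕ} (hu : u ∣ a * b * c * d) (hv : v ∣ a * b * c * d) :
    u ∣ v ↔ u.primeFactors ⊆ v.primeFactors := by
  constructor
  · exact fun huv => Nat.primeFactors_mono huv (ne_zero_of_dvd_ne_zero h.nz hv)
  · intro hsub
    rw [← Nat.prod_primeFactors_of_squarefree (h.squarefree.squarefree_of_dvd hu),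
      ← Nat.prod_primeFactors_of_squarefree (h.squarefree.squarefree_of_dvd hv)]
    exact Finset.prod_dvd_prod_of_subset _ _ _ hsub

end Quad

/-- map sending `a ↦ w`, `b ↦ x`, `c ↦ y`, everything else to `z`. -/
def pmFun (a b c w x y z t : ℕ) : ℕ :=
  if t = a then w else if t = b then x else if t = c then y else z

/-- the induced map on divisors. -/
def FF (a b c w x y z m : ℕ) : ℕ :=
  ∏ q ∈ m.primeFactors.image (pmFun a b c w x y z), q

section Maps

variable {a b c d w x y z : ℕ}

lemma pmFun_mem (t : ℕ) : pmFun a b c w x y z t ∈ ({w, x, y, z} : Finset ℕ) := by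
  unfold pmFun; split_ifs <;> simp

lemma pmFun_inv (h : Quad a b c d) (h' : Quad w x y z) {t : ℕ}
    (ht : t ∈ ({a, b, c, d} : Finset ℕ)) :
    pmFun w x y a b c d (pmFun a b c w x y z t) = t := by
  simp only [Finset.mem_insert, Finset.mem_singleton] at ht
  rcases ht with rfl | rfl | rfl | rfl
  · simp [pmFun]
  · simp [pmFun, Ne.symm h.hab, Ne.symm h'.hab]
  · simp [pmFun, Ne.symm h.hac, Ne.symm h.hbc, Ne.symm h'.hac, Ne.symm h'.hbc]
  · simp [pmFun, Ne.symm h.had, Ne.symm h.hbd, Ne.symm h.hcd,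
      Ne.symm h'.had, Ne.symm h'.hbd, Ne.symm h'.hcd]

lemma FF_primeFactors (h' : Quad w x y z) {m : ℕ} :
    (FF a b c w x y z m).primeFactors = m.primeFactors.image (pmFun a b c w x y z) := by
  apply Nat.primeFactors_prod
  intro q hq
  obtain ⟨t, _, rfl⟩ := Finset.mem_image.mp hq
  have hmem := pmFun_mem (a := a) (b := b) (c := c) (w := w) (x := x) (y := y) (z := z) t
  simp only [Finset.mem_insert, Finset.mem_singleton] at hmem
  rcases hmem with hh | hh | hh | hh <;> rw [hh]
  exacts [h'.pa, h'.pb, h'.pc, h'.pd]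

lemma FF_dvd (h' : Quad w x y z) {m : ℕ} : FF a b c w x y z m ∣ w * x * y * z := by
  rw [← h'.prod_eq]
  refine Finset.prod_dvd_prod_of_subset _ _ _ ?_
  intro q hq
  obtain ⟨t, _, rfl⟩ := Finset.mem_image.mp hq
  exact pmFun_mem t

lemma FF_inv (h : Quad a b c d) (h' : Quad w x y z) {m : ℕ} (hm : m ∣ a * b * c * d) :
    FF w x y a b c d (FF a b c w x y z m) = m := by
  have hsub : m.primeFactors ⊆ ({a, b, c, d} : Finset ℕ) := by
    rw [← h.primeFactors_eq]; exact Nat.primeFactors_mono hm h.nz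
  show ∏ q ∈ (FF a b c w x y z m).primeFactors.image (pmFun w x y a b c d), q = m
  rw [FF_primeFactors h', Finset.image_image]
  have : m.primeFactors.image (pmFun w x y a b c d ∘ pmFun a b c w x y z) = m.primeFactors := by
    rw [show m.primeFactors.image (pmFun w x y a b c d ∘ pmFun a b c w x y z)
        = m.primeFactors.image id from Finset.image_congr fun t ht => pmFun_inv h h' (hsub ht),
      Finset.image_id]
  rw [this]
  exact Nat.prod_primeFactors_of_squarefree (h.squarefree.squarefree_of_dvd hm)

lemma FF_dvd_iff (h : Quad a b c d) (h' : Quad w x y z) {u v : ℕ} (hu : u ∣ a * b * c * d) (hv : v ∣ a * b * c * d) :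
    FF a b c w x y z u ∣ FF a b c w x y z v ↔ u ∣ v := by
  have hsU : u.primeFactors ⊆ ({a, b, c, d} : Finset ℕ) := by
    rw [← h.primeFactors_eq]; exact Nat.primeFactors_mono hu h.nz
  have hsV : v.primeFactors ⊆ ({a, b, c, d} : Finset ℕ) := by
    rw [← h.primeFactors_eq]; exact Nat.primeFactors_mono hv h.nz
  rw [h'.dvd_iff_subset (FF_dvd h' (m := u)) (FF_dvd h' (m := v)),
    FF_primeFactors h', FF_primeFactors h', h.dvd_iff_subset hu hv]
  constructor
  · intro himg t ht
    have : pmFun a b c w x y z t ∈ v.primeFactors.image (pmFun a b c w x y z) :=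
      himg (Finset.mem_image_of_mem _ ht)
    obtain ⟨s, hs, hst⟩ := Finset.mem_image.mp this
    have hs_eq : s = t := by
      have h1 := pmFun_inv h h' (hsV hs)
      have h2 := pmFun_inv h h' (hsU ht)
      rw [hst] at h1; rw [h2] at h1; exact h1.symm
    rwa [← hs_eq]
  · exact Finset.image_subset_image

/-- The underlying equivalence. -/
def divisorEquiv (h : Quad a b c d) (h' : Quad w x y z) :
    {m : ℕ // m ∈ (a * b * c * d).divisors} ≃ {m : ℕ // m ∈ (w * x * y * z).divisors} where
  toFun m := ⟨FF a b c w x y z m, Nat.mem_divisors.mpr ⟨FF_dvd h', h'.nz⟩⟩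
  invFun m := ⟨FF w x y a b c d m, Nat.mem_divisors.mpr ⟨FF_dvd h, h.nz⟩⟩
  left_inv m := Subtype.ext (FF_inv h h' (Nat.mem_divisors.mp m.2).1)
  right_inv m := Subtype.ext (FF_inv h' h (Nat.mem_divisors.mp m.2).1)

/-- The graph isomorphism. -/
def divisorIso (h : Quad a b c d) (h' : Quad w x y z) :
    divisorGraph (a * b * c * d) ≃g divisorGraph (w * x * y * z) where
  toEquiv := divisorEquiv h h'
  map_rel_iff' := by
    intro u v
    have hu := (Nat.mem_divisors.mp u.2).1
    have hv := (Nat.mem_divisors.mp v.2).1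
    show (_ ≠ _ ∧ _) ↔ (_ ≠ _ ∧ _)
    refine and_congr ?_ (or_congr (FF_dvd_iff h h' hu hv) (FF_dvd_iff h h' hv hu))
    constructor
    · intro hne heq; exact hne (by rw [heq])
    · intro hne heq; exact hne ((divisorEquiv h h').injective heq)

end Maps

lemma iso_degree {V W : Type*} [Fintype V] [Fintype W] {G : SimpleGraph V} {G' : SimpleGraph W}
    [DecidableRel G.Adj] [DecidableRel G'.Adj] (φ : G ≃g G') (v : V) :
    G'.degree (φ v) = G.degree v := by
  rw [← SimpleGraph.card_neighborSet_eq_degree, ← SimpleGraph.card_neighborSet_eq_degree]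
  exact (Fintype.card_congr (φ.mapNeighborSet v)).symm

lemma sum_transfer {V W : Type*} [Fintype V] [Fintype W] [DecidableEq V] [DecidableEq W]
    {G : SimpleGraph V} {G' : SimpleGraph W} [DecidableRel G.Adj] [DecidableRel G'.Adj]
    (φ : G ≃g G') :
    ∑ e ∈ G.edgeFinset, Sym2.lift ⟨fun u v => (2 : ℚ) / ((G.degree u : ℚ) + (G.degree v : ℚ)),
        fun u v => by beta_reduce; rw [add_comm ((G.degree u : ℚ))]⟩ e =
    ∑ e ∈ G'.edgeFinset, Sym2.lift ⟨fun u v => (2 : ℚ) / ((G'.degree u : ℚ) + (G'.degree v : ℚ)),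
        fun u v => by beta_reduce; rw [add_comm ((G'.degree u : ℚ))]⟩ e := by
  refine Finset.sum_nbij' (fun e => e.map φ) (fun e => e.map φ.symm) ?_ ?_ ?_ ?_ ?_
  · intro e he
    rw [SimpleGraph.mem_edgeFinset] at he ⊢
    exact (SimpleGraph.Iso.map_mem_edgeSet_iff φ).mpr he
  · intro e he
    rw [SimpleGraph.mem_edgeFinset] at he ⊢
    exact (SimpleGraph.Iso.map_mem_edgeSet_iff φ.symm).mpr he
  · intro e _; induction e using Sym2.ind with
    | _ u v => simp
  · intro e _; induction e using Sym2.ind with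
    | _ u v => simp
  · intro e _; induction e using Sym2.ind with
    | _ u v =>
      simp only [Sym2.map_pair_eq, Sym2.lift_mk]
      rw [iso_degree φ u, iso_degree φ v]

lemma quad2357 : Quad 2 3 5 7 :=
  ⟨by norm_num, by norm_num, by norm_num, by norm_num,
   by norm_num, by norm_num, by norm_num, by norm_num, by norm_num, by norm_num⟩

set_option maxHeartbeats 2000000 in
lemma adj_fact : ∀ u v : {d : ℕ // d ∈ Nat.divisors (2*3*5*7)}, (divisorGraph (2*3*5*7)).Adj u v →
    ((divisorGraph (2*3*5*7)).degree u + (divisorGraph (2*3*5*7)).degree v) ∣ 77280 ∧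
    0 < (divisorGraph (2*3*5*7)).degree u + (divisorGraph (2*3*5*7)).degree v := by decide

set_option maxHeartbeats 2000000 in
lemma natsum : ∑ e ∈ (divisorGraph (2*3*5*7)).edgeFinset,
    Sym2.lift ⟨fun u v => 77280 / ((divisorGraph (2*3*5*7)).degree u + (divisorGraph (2*3*5*7)).degree v),
      fun u v => by beta_reduce; rw [Nat.add_comm]⟩ e = 290936 := by decide

lemma concrete_sum :
    ∑ e ∈ (divisorGraph (2*3*5*7)).edgeFinset,
      Sym2.lift ⟨fun u v =>
          (2 : ℚ) / (((divisorGraph (2*3*5*7)).degree u : ℚ) + ((divisorGraph (2*3*5*7)).degree v : ℚ)),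
        fun u v => by beta_reduce; rw [add_comm (((divisorGraph (2*3*5*7)).degree u : ℚ))]⟩ e =
      36367 / 4830 := by
  have step : ∀ e ∈ (divisorGraph (2*3*5*7)).edgeFinset,
      Sym2.lift ⟨fun u v =>
          (2 : ℚ) / (((divisorGraph (2*3*5*7)).degree u : ℚ) + ((divisorGraph (2*3*5*7)).degree v : ℚ)),
        fun u v => by beta_reduce; rw [add_comm (((divisorGraph (2*3*5*7)).degree u : ℚ))]⟩ e =
      ((Sym2.lift ⟨fun u v => 77280 / ((divisorGraph (2*3*5*7)).degree u + (divisorGraph (2*3*5*7)).degree v),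
        fun u v => by beta_reduce; rw [Nat.add_comm]⟩ e : ℕ) : ℚ) / 38640 := by
    intro e he
    induction e using Sym2.ind with
    | _ u v =>
      rw [SimpleGraph.mem_edgeFinset, SimpleGraph.mem_edgeSet] at he
      obtain ⟨hdvd, hpos⟩ := adj_fact u v he
      rw [Sym2.lift_mk, Sym2.lift_mk]
      beta_reduce
      rw [Nat.cast_div hdvd (by exact_mod_cast hpos.ne')]
      have h0 : (((divisorGraph (2*3*5*7)).degree u + (divisorGraph (2*3*5*7)).degree v : ℕ) : ℚ) ≠ 0 := by
        exact_mod_cast hpos.ne'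
      push_cast at h0 ⊢
      field_simp
      ring
  rw [Finset.sum_congr rfl step, ← Finset.sum_div, ← Nat.cast_sum, natsum]
  norm_num

/-- The harmonic index of `Γ₄`: the sum over all edges of `2 / (deg u + deg v)`. -/
theorem stmt_17 (p₁ p₂ p₃ p₄ : ℕ) (hp₁ : p₁.Prime) (hp₂ : p₂.Prime)
    (hp₃ : p₃.Prime) (hp₄ : p₄.Prime)
    (h12 : p₁ ≠ p₂) (h13 : p₁ ≠ p₃) (h14 : p₁ ≠ p₄)
    (h23 : p₂ ≠ p₃) (h24 : p₂ ≠ p₄) (h34 : p₃ ≠ p₄)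
    (n : ℕ) (hn : n = p₁ * p₂ * p₃ * p₄) :
    ∑ e ∈ (divisorGraph n).edgeFinset,
      Sym2.lift ⟨fun u v =>
          (2 : ℚ) / (((divisorGraph n).degree u : ℚ) + ((divisorGraph n).degree v : ℚ)),
        fun u v => by beta_reduce; rw [add_comm (((divisorGraph n).degree u : ℚ))]⟩ e =
      36367 / 4830 := by
  subst hn
  have hq : Quad p₁ p₂ p₃ p₄ := ⟨hp₁, hp₂, hp₃, hp₄, h12, h13, h14, h23, h24, h34⟩
  rw [sum_transfer (divisorIso hq quad2357)]
  exact concrete_sum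
end
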